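/- For every u ∈ ℳ one has I(u) = sup_{s,t ≥ 0} I(s·u⁺ + t·u⁻); in particular the supremum is attained at s = t = 1. -/

import Mathlib

noncomputable section

open Real Filter Set

namespace DPLap

/-- Forward difference operator. -/
def dlt (u : ℤ → ℝ) (n : ℤ) : ℝ := u (n + 1) - u n

/-- Positive part `u⁺`. -/
def pos (u : ℤ → ℝ) : ℤ → ℝ := fun n => max (u n) 0

/-- Negative part `u⁻`. -/
def neg (u : ℤ → ℝ) : ℤ → ℝ := fun n => min (u n) 0

/-- Summand of the `E`-norm. -/
def nsum (a b : ℤ → ℝ) (p : ℕ) (u : ℤ → ℝ) (n : ℤ) : ℝ :=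
  a n * |dlt u n| ^ p + b n * |u n| ^ p

/-- Membership in the space `E`. -/
def memE (a b : ℤ → ℝ) (p : ℕ) (u : ℤ → ℝ) : Prop :=
  Summable (nsum a b p u)

/-- The norm `‖u‖ = (∑ [a|Δu|^p + b|u|^p])^(1/p)`. -/
def dnorm (a b : ℤ → ℝ) (p : ℕ) (u : ℤ → ℝ) : ℝ :=
  (∑' n : ℤ, nsum a b p u n) ^ ((p : ℝ)⁻¹)

/-- Summand `c(n)|u(n)|^q ln(|u(n)|^r)` of the logarithmic term (with the
convention `0^q ln 0 = 0`, automatic from `Real.rpow` and `Real.log`). -/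
def logSummand (c : ℤ → ℝ) (q r : ℝ) (u : ℤ → ℝ) (n : ℤ) : ℝ :=
  c n * |u n| ^ q * Real.log (|u n| ^ r)

/-- Membership in `𝒟`. -/
def memD (a b c : ℤ → ℝ) (p : ℕ) (q r : ℝ) (u : ℤ → ℝ) : Prop :=
  memE a b p u ∧ Summable (logSummand c q r u)

/-- The energy functional `I`. -/
def En (a b c : ℤ → ℝ) (p : ℕ) (q r : ℝ) (u : ℤ → ℝ) : ℝ :=
  (1 / (p : ℝ)) * dnorm a b p u ^ p
    + (r / q ^ 2) * ∑' n : ℤ, c n * |u n| ^ q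
    - (1 / q) * ∑' n : ℤ, logSummand c q r u n

/-- The pairing `⟨I'(u), v⟩`. -/
def pr (a b c : ℤ → ℝ) (p : ℕ) (q r : ℝ) (u v : ℤ → ℝ) : ℝ :=
  (∑' n : ℤ, (a n * |dlt u n| ^ (p - 2) * dlt u n * dlt v n
      + b n * |u n| ^ (p - 2) * u n * v n))
    - ∑' n : ℤ, c n * |u n| ^ (q - 2) * u n * v n * Real.log (|u n| ^ r)

/-- The Nehari set `𝒩`. -/
def Nset (a b c : ℤ → ℝ) (p : ℕ) (q r : ℝ) : Set (ℤ → ℝ) :=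
  {u | memD a b c p q r u ∧ u ≠ 0 ∧ pr a b c p q r u u = 0}

/-- The sign-changing Nehari set `ℳ`. -/
def Mset (a b c : ℤ → ℝ) (p : ℕ) (q r : ℝ) : Set (ℤ → ℝ) :=
  {u | memD a b c p q r u ∧ pos u ≠ 0 ∧ neg u ≠ 0 ∧
      pr a b c p q r u (pos u) = 0 ∧ pr a b c p q r u (neg u) = 0}

/-- `m* = inf_ℳ I`. -/
def mStar (a b c : ℤ → ℝ) (p : ℕ) (q r : ℝ) : ℝ :=
  sInf (En a b c p q r '' Mset a b c p q r)

/-- `c* = inf_𝒩 I`. -/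
def cStar (a b c : ℤ → ℝ) (p : ℕ) (q r : ℝ) : ℝ :=
  sInf (En a b c p q r '' Nset a b c p q r)

/-- `|x|^(p-2) * x * x = |x|^p`. -/
lemma absmul_aux (p : ℕ) (hp : 2 ≤ p) (x : ℝ) : |x|^(p-2) * x * x = |x|^p := by
  have h : |x|^(p-2) * x * x = |x|^(p-2) * x^2 := by ring
  rw [h, ← sq_abs, ← pow_add]
  congr 1
  omega

/-- Convexity core inequality. -/
lemma key_ineq (p : ℕ) (hp : 2 ≤ p) (hpe : Even p) (A B s t : ℝ)
    (hs : 0 ≤ s) (ht : 0 ≤ t) (hAB : 0 ≤ A * B) :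
    |s*A + t*B| ^ p ≤ s^p * (|A+B|^(p-2) * (A+B) * A) + t^p * (|A+B|^(p-2) * (A+B) * B) := by
  have hpe2 : Even (p-2) := by
    rcases hpe with ⟨k, hk⟩
    exact ⟨k-1, by omega⟩
  rw [hpe2.pow_abs, hpe.pow_abs]
  rcases eq_or_ne (A+B) 0 with hC | hC
  · have hA : A = 0 := by nlinarith [sq_nonneg A]
    have hB : B = 0 := by linarith
    simp [hA, hB, zero_pow (by omega : p ≠ 0)]
  · set C := A + B with hCdef
    have hC2 : 0 < C^2 := by positivity
    have hAC : A*C = A^2 + A*B := by rw [hCdef]; ring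
    have hBC : B*C = B^2 + A*B := by rw [hCdef]; ring
    have hlam : 0 ≤ A*C/C^2 := div_nonneg (by nlinarith [sq_nonneg A]) hC2.le
    have hmu : 0 ≤ B*C/C^2 := div_nonneg (by nlinarith [sq_nonneg B]) hC2.le
    have hsum : A*C/C^2 + B*C/C^2 = 1 := by field_simp; ring
    have hconv := (convexOn_pow p).2 (Set.mem_Ici.2 hs) (Set.mem_Ici.2 ht) hlam hmu hsum
    simp only [smul_eq_mul] at hconv
    have h1 : s*A + t*B = C * (A*C/C^2 * s + B*C/C^2 * t) := by field_simp
    have hCp : 0 ≤ C^p := hpe.pow_nonneg C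
    have hsplit : C^p = C^(p-2) * C^2 := by rw [← pow_add]; congr 1; omega
    calc (s*A+t*B)^p = C^p * (A*C/C^2*s + B*C/C^2*t)^p := by rw [h1, mul_pow]
    _ ≤ C^p * (A*C/C^2 * s^p + B*C/C^2 * t^p) := mul_le_mul_of_nonneg_left hconv hCp
    _ = s^p * (C^(p-2)*C*A) + t^p * (C^(p-2)*C*B) := by
        rw [hsplit]; field_simp

/-- one-sided splitting of the log summand -/
lemma one_side (q r s z : ℝ) (hq : 0 < q) (hs : 0 ≤ s) :
    |s*z|^q * Real.log (|s*z|^r) = s^q * (r*Real.log s) * |z|^q + s^q * (|z|^q * Real.log (|z|^r)) := by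
  rcases eq_or_lt_of_le hs with hs0 | hs0
  · rw [← hs0]
    simp [Real.zero_rpow hq.ne']
  rcases eq_or_lt_of_le (abs_nonneg z) with hz0 | hz0
  · rw [← hz0]
    simp [abs_mul, ← hz0, Real.zero_rpow hq.ne']
  have habs : |s*z| = s * |z| := by rw [abs_mul, abs_of_nonneg hs]
  have hsz : 0 < s * |z| := mul_pos hs0 hz0
  rw [habs, Real.mul_rpow hs0.le (abs_nonneg z), Real.log_rpow hsz, Real.log_rpow hz0,
    Real.log_mul hs0.ne' hz0.ne']
  ring

/-- Scalar fiber-map maximization: `φ(s) ≤ φ(1)`. -/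
lemma phi_le (p : ℕ) (hp : 2 ≤ p) {q r α γ : ℝ} (hpq : (p:ℝ) < q) (hr : 1 ≤ r)
    (hα : 0 ≤ α) (hγ : 0 ≤ γ) {s : ℝ} (hs : 0 ≤ s) :
    (1/(p:ℝ)) * s^(p:ℝ) * α + (r/q^2) * s^q * γ
        - (1/q) * (s^q * (r * Real.log s) * γ + s^q * α)
      ≤ (1/(p:ℝ)) * α + (r/q^2) * γ - (1/q) * α := by
  have hp0 : (0:ℝ) < p := by positivity
  have hq : 0 < q := lt_trans hp0 hpq
  set f : ℝ → ℝ := fun y => (1/(p:ℝ)) * y^(p:ℝ) * α + (r/q^2) * y^q * γ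
      - (1/q) * (y^q * (r * Real.log y) * γ + y^q * α) with hf
  have hf1 : f 1 = (1/(p:ℝ)) * α + (r/q^2) * γ - (1/q) * α := by
    simp [hf, Real.one_rpow]
  have hderiv : ∀ x : ℝ, 0 < x →
      HasDerivAt f (α * (x^((p:ℝ)-1) - x^(q-1)) - r*γ*(x^(q-1)*Real.log x)) x := by
    intro x hx
    have h1 : HasDerivAt (fun y : ℝ => y ^ (p:ℝ)) ((p:ℝ) * x ^ ((p:ℝ)-1)) x :=
      Real.hasDerivAt_rpow_const (Or.inl hx.ne')
    have h2 : HasDerivAt (fun y : ℝ => y ^ q) (q * x ^ (q-1)) x :=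
      Real.hasDerivAt_rpow_const (Or.inl hx.ne')
    have h3 : HasDerivAt Real.log x⁻¹ x := Real.hasDerivAt_log hx.ne'
    have hA : HasDerivAt (fun y : ℝ => (1/(p:ℝ)) * y^(p:ℝ) * α)
        ((1/(p:ℝ)) * ((p:ℝ) * x ^ ((p:ℝ)-1)) * α) x := (h1.const_mul _).mul_const α
    have hB : HasDerivAt (fun y : ℝ => (r/q^2) * y^q * γ)
        ((r/q^2) * (q * x ^ (q-1)) * γ) x := (h2.const_mul _).mul_const γ
    have hC : HasDerivAt (fun y : ℝ => y^q * (r * Real.log y))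
        (q * x^(q-1) * (r * Real.log x) + x^q * (r * x⁻¹)) x := h2.mul (h3.const_mul r)
    have hD : HasDerivAt (fun y : ℝ => y^q * (r * Real.log y) * γ + y^q * α)
        ((q * x^(q-1) * (r * Real.log x) + x^q * (r * x⁻¹)) * γ + (q * x ^ (q-1)) * α) x :=
      (hC.mul_const γ).add (h2.mul_const α)
    have hE := (hA.add hB).sub (hD.const_mul (1/q))
    refine hE.congr_deriv ?_
    have hx1 : x^q * x⁻¹ = x^(q-1) := by
      rw [Real.rpow_sub_one hx.ne']; field_simp
    have hx2 : x^q * (r * x⁻¹) = r * x^(q-1) := by rw [← hx1]; ring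
    rw [hx2]
    field_simp
    ring
  have hr0 : (0:ℝ) ≤ r := by linarith
  rcases eq_or_lt_of_le hs with hs0 | hs'
  · rw [← hs0, Real.zero_rpow hp0.ne', Real.zero_rpow hq.ne']
    have h1q : 1/q ≤ 1/(p:ℝ) := one_div_le_one_div_of_le hp0 hpq.le
    have hγ' : 0 ≤ (r/q^2) * γ := by positivity
    nlinarith
  · have hcont : ∀ x : ℝ, 0 < x → ContinuousAt f x := fun x hx =>
      (hderiv x hx).differentiableAt.continuousAt
    rcases le_total s 1 with h1 | h1
    · have hmono : MonotoneOn f (Icc s 1) := by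
        apply monotoneOn_of_deriv_nonneg (convex_Icc s 1)
        · exact fun x hx => (hcont x (lt_of_lt_of_le hs' hx.1)).continuousWithinAt
        · intro x hx
          rw [interior_Icc] at hx
          exact (hderiv x (lt_trans hs' hx.1)).differentiableAt.differentiableWithinAt
        · intro x hx
          rw [interior_Icc] at hx
          have hx0 : 0 < x := lt_trans hs' hx.1
          rw [(hderiv x hx0).deriv]
          have hle : x ^ (q-1) ≤ x ^ ((p:ℝ)-1) :=
            Real.rpow_le_rpow_of_exponent_ge hx0 hx.2.le (by linarith)
          have hlog : Real.log x ≤ 0 := Real.log_nonpos hx0.le hx.2.le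
          have hxq : (0:ℝ) ≤ x^(q-1) := (Real.rpow_pos_of_pos hx0 _).le
          nlinarith [mul_nonneg hα (sub_nonneg.2 hle),
            mul_nonneg (mul_nonneg hr0 hγ) (mul_nonneg hxq (neg_nonneg.2 hlog))]
      have h2 : f s ≤ f 1 := hmono (left_mem_Icc.2 h1) (right_mem_Icc.2 h1) h1
      rw [hf1] at h2
      exact h2
    · have hanti : AntitoneOn f (Icc 1 s) := by
        apply antitoneOn_of_deriv_nonpos (convex_Icc 1 s)
        · exact fun x hx => (hcont x (lt_of_lt_of_le one_pos hx.1)).continuousWithinAt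
        · intro x hx
          rw [interior_Icc] at hx
          exact (hderiv x (lt_trans one_pos hx.1)).differentiableAt.differentiableWithinAt
        · intro x hx
          rw [interior_Icc] at hx
          have hx0 : 0 < x := lt_trans one_pos hx.1
          rw [(hderiv x hx0).deriv]
          have hle : x ^ ((p:ℝ)-1) ≤ x ^ (q-1) :=
            Real.rpow_le_rpow_of_exponent_le hx.1.le (by linarith)
          have hlog : 0 ≤ Real.log x := Real.log_nonneg hx.1.le
          have hxq : (0:ℝ) ≤ x^(q-1) := (Real.rpow_pos_of_pos hx0 _).le
          nlinarith [mul_nonneg hα (sub_nonneg.2 hle),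
            mul_nonneg (mul_nonneg hr0 hγ) (mul_nonneg hxq hlog)]
      have h2 : f s ≤ f 1 := hanti (left_mem_Icc.2 h1) (right_mem_Icc.2 h1) h1
      rw [hf1] at h2
      exact h2

theorem stmt8 (p : ℕ) (hp2 : 2 ≤ p) (hpe : Even p)
    (q r : ℝ) (hpq : (p : ℝ) < q) (hr : 1 ≤ r)
    (a b c : ℤ → ℝ)
    (ha : ∀ n, 0 < a n) (hb : ∀ n, 0 < b n) (hc : ∀ n, 0 < c n)
    (b0 : ℝ) (hb0 : 0 < b0) (hbb : ∀ n, b0 ≤ b n)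
    (hbinf : Tendsto b cofinite atTop)
    (c0 : ℝ) (hc0 : 0 < c0) (hcc : ∀ n, c n ≤ c0)
    (hcsum : Summable c)
    (u : ℤ → ℝ) (hu : u ∈ Mset a b c p q r) :
    IsGreatest
      {x : ℝ | ∃ s t : ℝ, 0 ≤ s ∧ 0 ≤ t ∧
        x = En a b c p q r (fun n => s * pos u n + t * neg u n)}
      (En a b c p q r u) := by
  obtain ⟨⟨hEu, hLu⟩, hPne, hNne, hprP, hprN⟩ := hu
  set P := pos u with hPdef
  set N := DPLap.neg u with hNdef
  have hpne : p ≠ 0 := by omega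
  have hp0 : (0:ℝ) < p := by positivity
  have hq0 : (0:ℝ) < q := lt_trans hp0 hpq
  have hr0 : (0:ℝ) < r := lt_of_lt_of_le one_pos hr
  -- basic pointwise facts
  have hP0 : ∀ n, 0 ≤ P n := fun n => le_max_right _ _
  have hN0 : ∀ n, N n ≤ 0 := fun n => min_le_right _ _
  have hPN : ∀ n, P n + N n = u n := by
    intro n
    show max (u n) 0 + min (u n) 0 = u n
    rw [max_add_min, add_zero]
  have hmulPN : ∀ n, P n * N n = 0 := by
    intro n
    rcases le_total (u n) 0 with h | h
    · have : P n = 0 := max_eq_right h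
      rw [this, zero_mul]
    · have : N n = 0 := min_eq_right h
      rw [this, mul_zero]
  have hdltsplit : ∀ n, dlt P n + dlt N n = dlt u n := by
    intro n
    simp only [dlt, ← hPN]
    ring
  have hABn : ∀ n, 0 ≤ dlt P n * dlt N n := by
    intro n
    simp only [dlt]
    nlinarith [hmulPN n, hmulPN (n+1), mul_nonneg (hP0 (n+1)) (neg_nonneg.2 (hN0 n)),
      mul_nonneg (hP0 n) (neg_nonneg.2 (hN0 (n+1)))]
  have huP : ∀ n, u n * P n = P n ^ 2 := by
    intro n
    rw [← hPN n]
    linear_combination hmulPN n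
  have huN : ∀ n, u n * N n = N n ^ 2 := by
    intro n
    rw [← hPN n]
    linear_combination hmulPN n
  -- the pieces of ⟨I'(u), u±⟩
  set gP : ℤ → ℝ := fun n => a n * |dlt u n| ^ (p - 2) * dlt u n * dlt P n
      + b n * |u n| ^ (p - 2) * u n * P n with hgP
  set gN : ℤ → ℝ := fun n => a n * |dlt u n| ^ (p - 2) * dlt u n * dlt N n
      + b n * |u n| ^ (p - 2) * u n * N n with hgN
  have hgh : ∀ n, gP n + gN n = nsum a b p u n := by
    intro n
    show _ = a n * |dlt u n| ^ p + b n * |u n| ^ p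
    simp only [hgP, hgN]
    rw [← absmul_aux p hp2 (dlt u n), ← absmul_aux p hp2 (u n), ← hdltsplit n, ← hPN n]
    ring
  have hnn : ∀ (w : ℤ → ℝ) (n : ℤ), 0 ≤ nsum a b p w n := by
    intro w n
    have h1 : 0 ≤ a n * |dlt w n| ^ p := mul_nonneg (ha n).le (by positivity)
    have h2 : 0 ≤ b n * |w n| ^ p := mul_nonneg (hb n).le (by positivity)
    exact add_nonneg h1 h2
  have hgP0 : ∀ n, 0 ≤ gP n := by
    intro n
    have h1 : 0 ≤ dlt u n * dlt P n := by
      rw [← hdltsplit n]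
      nlinarith [hABn n, sq_nonneg (dlt P n)]
    have h2 : 0 ≤ u n * P n := by rw [huP n]; positivity
    have e : gP n = (a n * |dlt u n| ^ (p-2)) * (dlt u n * dlt P n)
        + (b n * |u n| ^ (p-2)) * (u n * P n) := by simp only [hgP]; ring
    rw [e]
    have := ha n
    have := hb n
    positivity
  have hgN0 : ∀ n, 0 ≤ gN n := by
    intro n
    have h1 : 0 ≤ dlt u n * dlt N n := by
      rw [← hdltsplit n]
      nlinarith [hABn n, sq_nonneg (dlt N n)]
    have h2 : 0 ≤ u n * N n := by rw [huN n]; positivity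
    have e : gN n = (a n * |dlt u n| ^ (p-2)) * (dlt u n * dlt N n)
        + (b n * |u n| ^ (p-2)) * (u n * N n) := by simp only [hgN]; ring
    rw [e]
    have := ha n
    have := hb n
    positivity
  have hsgP : Summable gP :=
    Summable.of_nonneg_of_le hgP0 (fun n => by linarith [hgh n, hgN0 n]) hEu
  have hsgN : Summable gN :=
    Summable.of_nonneg_of_le hgN0 (fun n => by linarith [hgh n, hgP0 n]) hEu
  set α1 := ∑' n, gP n with hα1def
  set α2 := ∑' n, gN n with hα2def
  have hα1 : 0 ≤ α1 := tsum_nonneg hgP0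
  have hα2 : 0 ≤ α2 := tsum_nonneg hgN0
  -- a uniform bound for |u|
  set K : ℝ := max 1 ((∑' n, nsum a b p u n) / b0) with hKdef
  have hK1 : (1:ℝ) ≤ K := le_max_left _ _
  have hK : ∀ n, |u n| ≤ K := by
    intro n
    have h1 : nsum a b p u n ≤ ∑' m, nsum a b p u m := Summable.le_tsum hEu n fun m _ => hnn u m
    have h2 : b0 * |u n| ^ p ≤ nsum a b p u n := by
      show b0 * |u n| ^ p ≤ a n * |dlt u n| ^ p + b n * |u n| ^ p
      have h3 : 0 ≤ a n * |dlt u n| ^ p := mul_nonneg (ha n).le (by positivity)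
      have h4 : b0 * |u n| ^ p ≤ b n * |u n| ^ p :=
        mul_le_mul_of_nonneg_right (hbb n) (by positivity)
      linarith
    have h3 : |u n| ^ p ≤ (∑' m, nsum a b p u m) / b0 := by
      rw [le_div_iff₀ hb0, mul_comm]
      linarith
    rcases le_total (|u n|) 1 with h | h
    · exact le_trans h hK1
    · exact le_trans (le_trans (le_self_pow₀ h hpne) h3) (le_max_right _ _)
  have hK0 : (0:ℝ) < K := lt_of_lt_of_le one_pos hK1
  -- |P|, |N| ≤ |u|
  have hPle : ∀ n, |P n| ≤ |u n| := by
    intro n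
    rw [abs_of_nonneg (hP0 n)]
    exact max_le (le_abs_self _) (abs_nonneg _)
  have hNle : ∀ n, |N n| ≤ |u n| := by
    intro n
    rw [abs_of_nonpos (hN0 n)]
    rcases le_total (u n) 0 with h | h
    · have : N n = u n := min_eq_left h
      rw [this]
      exact neg_le_abs _
    · have : N n = 0 := min_eq_right h
      rw [this]
      simp
  -- summability of the c-terms
  set cP : ℤ → ℝ := fun n => c n * |P n| ^ q with hcP
  set cN : ℤ → ℝ := fun n => c n * |N n| ^ q with hcN
  have hcP0 : ∀ n, 0 ≤ cP n := fun n =>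
    mul_nonneg (hc n).le (Real.rpow_nonneg (abs_nonneg _) q)
  have hcN0 : ∀ n, 0 ≤ cN n := fun n =>
    mul_nonneg (hc n).le (Real.rpow_nonneg (abs_nonneg _) q)
  have hscP : Summable cP := by
    apply Summable.of_nonneg_of_le hcP0 (fun n => ?_) (hcsum.mul_right (K ^ q))
    exact mul_le_mul_of_nonneg_left
      (Real.rpow_le_rpow (abs_nonneg _) (le_trans (hPle n) (hK n)) hq0.le) (hc n).le
  have hscN : Summable cN := by
    apply Summable.of_nonneg_of_le hcN0 (fun n => ?_) (hcsum.mul_right (K ^ q))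
    exact mul_le_mul_of_nonneg_left
      (Real.rpow_le_rpow (abs_nonneg _) (le_trans (hNle n) (hK n)) hq0.le) (hc n).le
  set γ1 := ∑' n, cP n with hγ1def
  set γ2 := ∑' n, cN n with hγ2def
  have hγ1 : 0 ≤ γ1 := tsum_nonneg hcP0
  have hγ2 : 0 ≤ γ2 := tsum_nonneg hcN0
  -- summability of log terms of P and N
  have hlgPeq : ∀ n, logSummand c q r P n = Set.indicator {m | 0 < u m} (logSummand c q r u) n := by
    intro n
    rw [Set.indicator_apply]
    split_ifs with hn
    · have hPn : P n = u n := max_eq_left (le_of_lt hn)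
      simp only [logSummand, hPn]
    · have hPn : P n = 0 := max_eq_right (not_lt.1 hn)
      simp [logSummand, hPn, Real.zero_rpow hq0.ne']
  have hslgP : Summable (logSummand c q r P) :=
    (hLu.indicator {m | 0 < u m}).congr fun n => (hlgPeq n).symm
  have hlgNeq : ∀ n, logSummand c q r N n = Set.indicator {m | u m < 0} (logSummand c q r u) n := by
    intro n
    rw [Set.indicator_apply]
    split_ifs with hn
    · have hNn : N n = u n := min_eq_left (le_of_lt hn)
      simp only [logSummand, hNn]
    · have hNn : N n = 0 := min_eq_right (not_lt.1 hn)
      simp [logSummand, hNn, Real.zero_rpow hq0.ne']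
  have hslgN : Summable (logSummand c q r N) :=
    (hLu.indicator {m | u m < 0}).congr fun n => (hlgNeq n).symm
  -- the Nehari identities
  have hwP : ∀ n, c n * |u n| ^ (q - 2) * u n * P n * Real.log (|u n| ^ r)
      = logSummand c q r P n := by
    intro n
    rcases lt_trichotomy (u n) 0 with hn | hn | hn
    · have hPn : P n = 0 := max_eq_right hn.le
      simp [logSummand, hPn, Real.zero_rpow hq0.ne']
    · have hPn : P n = 0 := max_eq_right hn.le
      simp [logSummand, hPn, Real.zero_rpow hq0.ne']
    · have hPn : P n = u n := max_eq_left hn.le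
      have e1 : |u n| ^ (q-2) * u n * u n = |u n| ^ q := by
        rw [abs_of_pos hn, ← Real.rpow_add_one hn.ne', ← Real.rpow_add_one hn.ne']
        congr 1
        ring
      simp only [logSummand, hPn]
      rw [← e1]
      ring
  have hwN : ∀ n, c n * |u n| ^ (q - 2) * u n * N n * Real.log (|u n| ^ r)
      = logSummand c q r N n := by
    intro n
    rcases lt_trichotomy (u n) 0 with hn | hn | hn
    · have hNn : N n = u n := min_eq_left hn.le
      have hun : u n ≠ 0 := hn.ne
      have e1 : |u n| ^ (q-2) * u n * u n = |u n| ^ q := by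
        have h2 : |u n| ^ (q-2) * u n * u n = |u n| ^ (q-2) * |u n| * |u n| := by
          rw [abs_of_neg hn]; ring
        have hab : |u n| ≠ 0 := abs_ne_zero.2 hun
        rw [h2, ← Real.rpow_add_one hab, ← Real.rpow_add_one hab]
        congr 1
        ring
      simp only [logSummand, hNn]
      rw [← e1]
      ring
    · have hNn : N n = 0 := min_eq_right hn.ge
      simp [logSummand, hNn, Real.zero_rpow hq0.ne']
    · have hNn : N n = 0 := min_eq_right hn.le
      simp [logSummand, hNn, Real.zero_rpow hq0.ne']
  have hNehP : α1 = ∑' n, logSummand c q r P n := by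
    have h0 : (∑' n, gP n)
        - (∑' n, c n * |u n| ^ (q - 2) * u n * P n * Real.log (|u n| ^ r)) = 0 := hprP
    rw [tsum_congr hwP] at h0
    rw [hα1def]
    linarith
  have hNehN : α2 = ∑' n, logSummand c q r N n := by
    have h0 : (∑' n, gN n)
        - (∑' n, c n * |u n| ^ (q - 2) * u n * N n * Real.log (|u n| ^ r)) = 0 := hprN
    rw [tsum_congr hwN] at h0
    rw [hα2def]
    linarith
  -- value of En at u
  have hdu : dnorm a b p u ^ p = α1 + α2 := by
    have h1 : (∑' n, nsum a b p u n) = α1 + α2 := by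
      rw [hα1def, hα2def, ← Summable.tsum_add hsgP hsgN]
      exact tsum_congr fun n => (hgh n).symm
    unfold dnorm
    rw [Real.rpow_inv_natCast_pow (tsum_nonneg (hnn u)) hpne]
    exact h1
  have hcu : (∑' n, c n * |u n| ^ q) = γ1 + γ2 := by
    rw [hγ1def, hγ2def, ← Summable.tsum_add hscP hscN]
    apply tsum_congr
    intro n
    simp only [hcP, hcN, Pi.add_apply]
    rcases le_total (u n) 0 with h | h
    · have hPn : P n = 0 := max_eq_right h
      have hNn : N n = u n := min_eq_left h
      rw [hPn, hNn, abs_zero, Real.zero_rpow hq0.ne']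
      ring
    · have hNn : N n = 0 := min_eq_right h
      have hPn : P n = u n := max_eq_left h
      rw [hPn, hNn, abs_zero, Real.zero_rpow hq0.ne']
      ring
  have hlu : (∑' n, logSummand c q r u n) = α1 + α2 := by
    rw [hNehP, hNehN, ← Summable.tsum_add hslgP hslgN]
    apply tsum_congr
    intro n
    simp only [logSummand, Pi.add_apply]
    rcases le_total (u n) 0 with h | h
    · have hPn : P n = 0 := max_eq_right h
      have hNn : N n = u n := min_eq_left h
      rw [hPn, hNn, abs_zero, Real.zero_rpow hq0.ne']
      ring
    · have hNn : N n = 0 := min_eq_right h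
      have hPn : P n = u n := max_eq_left h
      rw [hPn, hNn, abs_zero, Real.zero_rpow hq0.ne']
      ring
  have hEnu : En a b c p q r u
      = (1/(p:ℝ))*(α1+α2) + (r/q^2)*(γ1+γ2) - (1/q)*(α1+α2) := by
    unfold En
    rw [hdu, hcu, hlu]
  constructor
  · refine ⟨1, 1, zero_le_one, zero_le_one, ?_⟩
    congr 1
    funext n
    rw [one_mul, one_mul]
    exact (hPN n).symm
  · rintro x ⟨s, t, hs, ht, rfl⟩
    set v : ℤ → ℝ := fun n => s * P n + t * N n with hv
    have hvd : ∀ n, dlt v n = s * dlt P n + t * dlt N n := by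
      intro n
      simp only [hv, dlt]
      ring
    have hnv : ∀ n, nsum a b p v n ≤ s^p * gP n + t^p * gN n := by
      intro n
      have h1 := key_ineq p hp2 hpe (dlt P n) (dlt N n) s t hs ht (hABn n)
      have h2 := key_ineq p hp2 hpe (P n) (N n) s t hs ht (le_of_eq (hmulPN n).symm)
      rw [hdltsplit n] at h1
      rw [hPN n] at h2
      have e1 : nsum a b p v n
          = a n * |s * dlt P n + t * dlt N n| ^ p + b n * |s * P n + t * N n| ^ p := by
        show a n * |dlt v n| ^ p + b n * |v n| ^ p = _
        rw [hvd n]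
      rw [e1]
      calc a n * |s * dlt P n + t * dlt N n| ^ p + b n * |s * P n + t * N n| ^ p
          ≤ a n * (s^p * (|dlt u n|^(p-2) * dlt u n * dlt P n)
                + t^p * (|dlt u n|^(p-2) * dlt u n * dlt N n))
            + b n * (s^p * (|u n|^(p-2) * u n * P n) + t^p * (|u n|^(p-2) * u n * N n)) :=
            add_le_add (mul_le_mul_of_nonneg_left h1 (ha n).le)
              (mul_le_mul_of_nonneg_left h2 (hb n).le)
        _ = s^p * gP n + t^p * gN n := by
            simp only [hgP, hgN]
            ring
    have hsnv : Summable (nsum a b p v) :=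
      Summable.of_nonneg_of_le (hnn v) hnv ((hsgP.mul_left _).add (hsgN.mul_left _))
    have hTv : (∑' n, nsum a b p v n) ≤ s^p * α1 + t^p * α2 := by
      calc (∑' n, nsum a b p v n) ≤ ∑' n, (s^p * gP n + t^p * gN n) :=
            Summable.tsum_le_tsum hnv hsnv ((hsgP.mul_left _).add (hsgN.mul_left _))
        _ = s^p * α1 + t^p * α2 := by
            rw [Summable.tsum_add (hsgP.mul_left _) (hsgN.mul_left _), tsum_mul_left, tsum_mul_left,
              ← hα1def, ← hα2def]
    have hdv : dnorm a b p v ^ p = ∑' n, nsum a b p v n := by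
      unfold dnorm
      exact Real.rpow_inv_natCast_pow (tsum_nonneg (hnn v)) hpne
    have hcv : ∀ n, c n * |v n| ^ q = s^q * cP n + t^q * cN n := by
      intro n
      simp only [hv, hcP, hcN]
      rcases le_total (u n) 0 with h | h
      · have hPn : P n = 0 := max_eq_right h
        rw [hPn, mul_zero, zero_add, abs_mul, abs_of_nonneg ht,
          Real.mul_rpow ht (abs_nonneg _), abs_zero, Real.zero_rpow hq0.ne']
        ring
      · have hNn : N n = 0 := min_eq_right h
        rw [hNn, mul_zero, add_zero, abs_mul, abs_of_nonneg hs,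
          Real.mul_rpow hs (abs_nonneg _), abs_zero, Real.zero_rpow hq0.ne']
        ring
    have hT2 : (∑' n, c n * |v n| ^ q) = s^q * γ1 + t^q * γ2 := by
      rw [tsum_congr hcv, Summable.tsum_add (hscP.mul_left _) (hscN.mul_left _), tsum_mul_left,
        tsum_mul_left, ← hγ1def, ← hγ2def]
    have hlv : ∀ n, logSummand c q r v n
        = (s^q * (r * Real.log s) * cP n + s^q * logSummand c q r P n)
          + (t^q * (r * Real.log t) * cN n + t^q * logSummand c q r N n) := by
      intro n
      rcases le_total (u n) 0 with h | h
      · have hPn : P n = 0 := max_eq_right h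
        have hvn : v n = t * N n := by
          simp only [hv]
          rw [hPn]
          ring
        have h1 := one_side q r t (N n) hq0 ht
        simp only [logSummand, hcP, hcN, hvn, hPn]
        rw [abs_zero, Real.zero_rpow hq0.ne']
        linear_combination (c n) * h1
      · have hNn : N n = 0 := min_eq_right h
        have hvn : v n = s * P n := by
          simp only [hv]
          rw [hNn]
          ring
        have h1 := one_side q r s (P n) hq0 hs
        simp only [logSummand, hcP, hcN, hvn, hNn]
        rw [abs_zero, Real.zero_rpow hq0.ne']
        linear_combination (c n) * h1
    have hslv : Summable (logSummand c q r v) :=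
      (((hscP.mul_left _).add (hslgP.mul_left _)).add
        ((hscN.mul_left _).add (hslgN.mul_left _))).congr fun n => (hlv n).symm
    have hT3 : (∑' n, logSummand c q r v n)
        = (s^q * (r*Real.log s) * γ1 + s^q * α1) + (t^q * (r*Real.log t) * γ2 + t^q * α2) := by
      rw [tsum_congr hlv,
        Summable.tsum_add ((hscP.mul_left _).add (hslgP.mul_left _))
          ((hscN.mul_left _).add (hslgN.mul_left _)),
        Summable.tsum_add (hscP.mul_left _) (hslgP.mul_left _),
        Summable.tsum_add (hscN.mul_left _) (hslgN.mul_left _),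
        tsum_mul_left, tsum_mul_left, tsum_mul_left, tsum_mul_left,
        ← hγ1def, ← hγ2def, ← hNehP, ← hNehN]
    have key1 := phi_le p hp2 hpq hr hα1 hγ1 hs
    have key2 := phi_le p hp2 hpq hr hα2 hγ2 ht
    rw [Real.rpow_natCast] at key1 key2
    have hEnv : En a b c p q r v
        ≤ (1/(p:ℝ)) * (s^p*α1 + t^p*α2) + (r/q^2)*(s^q*γ1 + t^q*γ2)
          - (1/q)*((s^q*(r*Real.log s)*γ1 + s^q*α1) + (t^q*(r*Real.log t)*γ2 + t^q*α2)) := by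
      unfold En
      rw [hdv, hT2, hT3]
      have h5 : (1/(p:ℝ)) * (∑' n, nsum a b p v n) ≤ (1/(p:ℝ)) * (s^p*α1+t^p*α2) :=
        mul_le_mul_of_nonneg_left hTv (by positivity)
      linarith
    rw [hEnu]
    calc En a b c p q r v
        ≤ (1/(p:ℝ)) * (s^p*α1 + t^p*α2) + (r/q^2)*(s^q*γ1 + t^q*γ2)
          - (1/q)*((s^q*(r*Real.log s)*γ1 + s^q*α1) + (t^q*(r*Real.log t)*γ2 + t^q*α2)) := hEnv
      _ = ((1/(p:ℝ))*s^p*α1 + (r/q^2)*s^q*γ1 - (1/q)*(s^q*(r*Real.log s)*γ1 + s^q*α1))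
          + ((1/(p:ℝ))*t^p*α2 + (r/q^2)*t^q*γ2 - (1/q)*(t^q*(r*Real.log t)*γ2 + t^q*α2)) := by
          ring
      _ ≤ ((1/(p:ℝ))*α1 + (r/q^2)*γ1 - (1/q)*α1)
          + ((1/(p:ℝ))*α2 + (r/q^2)*γ2 - (1/q)*α2) := add_le_add key1 key2
      _ = (1/(p:ℝ))*(α1+α2) + (r/q^2)*(γ1+γ2) - (1/q)*(α1+α2) := by ring

end DPLap
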